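/- Let K be a regular incidence complex of rank n with flag-transitive automorphism subgroup Λ and base flag Φ, and let R_i and R_{-1} = Λ_Φ be the distinguished subgroups. Then the number of flags of K that are i-adjacent to Φ equals the index |R_i : R_{-1}| minus 1. -/

import Mathlib

universe u

variable {α : Type u}

/-- A ranked partial order `(α, ≤)` with rank function `rk` is an incidence complex of
rank `n`: ranks run from `-1` to `n` and are strictly monotone, there are unique minimal
and maximal faces, every flag (maximal chain) contains a face of each rank `-1,…,n` (hence
has exactly `n+2` faces), the complex is strongly flag-connected, and between any two
incident faces of ranks `j-1` and `j+1` there are at least two faces of rank `j`. -/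
structure IsIncidenceComplex (n : ℕ) [PartialOrder α] (rk : α → ℤ) : Prop where
  rk_strictMono : ∀ {F G : α}, F < G → rk F < rk G
  rk_range : ∀ F : α, -1 ≤ rk F ∧ rk F ≤ n
  exists_bot : ∃ B : α, rk B = -1 ∧ ∀ F : α, B ≤ F
  exists_top : ∃ T : α, rk T = n ∧ ∀ F : α, F ≤ T
  flag_rk : ∀ Φ : Set α, IsMaxChain (· ≤ ·) Φ → ∀ j : ℤ, -1 ≤ j → j ≤ n →
    ∃ F ∈ Φ, rk F = j
  strongly_connected : ∀ Φ Ψ : Set α, IsMaxChain (· ≤ ·) Φ → IsMaxChain (· ≤ ·) Ψ →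
    Relation.ReflTransGen
      (fun A B => IsMaxChain (· ≤ ·) A ∧ IsMaxChain (· ≤ ·) B ∧ Φ ∩ Ψ ⊆ A ∧ Φ ∩ Ψ ⊆ B ∧
        ∃ F G, F ∈ A ∧ G ∈ B ∧ F ≠ G ∧ A \ {F} = B \ {G}) Φ Ψ
  diamond_ge_two : ∀ F G : α, F < G → rk G = rk F + 2 →
    ∃ H₁ H₂ : α, H₁ ≠ H₂ ∧ F < H₁ ∧ H₁ < G ∧ F < H₂ ∧ H₂ < G

/-- Two flags are `i`-adjacent when they differ in exactly one face, of rank `i`. -/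
def IAdjacent [PartialOrder α] (rk : α → ℤ) (i : ℤ) (Φ Ψ : Set α) : Prop :=
  ∃ F G, F ∈ Φ ∧ G ∈ Ψ ∧ F ≠ G ∧ rk F = i ∧ rk G = i ∧ Φ \ {F} = Ψ \ {G}

/-- The group of order automorphisms of `α`, as a subgroup of the permutations of `α`. -/
def orderAutGroup (α : Type u) [PartialOrder α] : Subgroup (Equiv.Perm α) where
  carrier := {φ | ∀ a b : α, φ a ≤ φ b ↔ a ≤ b}
  one_mem' := fun _ _ => Iff.rfl
  mul_mem' := by
    intro f g hf hg a b
    rw [Equiv.Perm.mul_apply, Equiv.Perm.mul_apply]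
    exact (hf (g a) (g b)).trans (hg a b)
  inv_mem' := by
    intro f hf a b
    conv_rhs => rw [← (show f (f⁻¹ a) = a from f.apply_symm_apply a),
      ← (show f (f⁻¹ b) = b from f.apply_symm_apply b)]
    exact (hf _ _).symm

/-- `Λ` is a flag-transitive group of automorphisms. -/
def FlagTransitive [PartialOrder α] (Λ : Subgroup (Equiv.Perm α)) : Prop :=
  ∀ Φ Ψ : Set α, IsMaxChain (· ≤ ·) Φ → IsMaxChain (· ≤ ·) Ψ → ∃ γ ∈ Λ, γ '' Φ = Ψ

/-- The elementwise stabilizer in `Λ` of a set `Ω` of faces. -/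
def stabOf [PartialOrder α] (Λ : Subgroup (Equiv.Perm α)) (Ω : Set α) :
    Subgroup (Equiv.Perm α) where
  carrier := {γ | γ ∈ Λ ∧ ∀ x ∈ Ω, γ x = x}
  one_mem' := ⟨Λ.one_mem, fun _ _ => rfl⟩
  mul_mem' := by
    intro f g hf hg
    refine ⟨Λ.mul_mem hf.1 hg.1, fun x hx => ?_⟩
    rw [Equiv.Perm.mul_apply, hg.2 x hx, hf.2 x hx]
  inv_mem' := by
    intro f hf
    refine ⟨Λ.inv_mem hf.1, fun x hx => ?_⟩
    simpa using (congrArg (⇑f⁻¹) (hf.2 x hx)).symm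

/-- The distinguished subgroup `R_i` of `Λ` relative to a base flag enumerated by
`F : Fin n → α`: the elements of `Λ` fixing every base face `F j` with `j ≠ i`.  For
`i ∉ {0,…,n-1}` (e.g. `i = -1` or `i = n`) this is the stabilizer of the base flag. -/
def distinguishedSubgroup [PartialOrder α] {n : ℕ} (Λ : Subgroup (Equiv.Perm α))
    (F : Fin n → α) (i : ℤ) : Subgroup (Equiv.Perm α) :=
  stabOf Λ {x | ∃ j : Fin n, (j : ℤ) ≠ i ∧ x = F j}

section helpers
variable [PartialOrder α] {n : ℕ} {rk : α → ℤ}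

lemma chain_rk_inj (h : IsIncidenceComplex n rk) {Ψ : Set α} (hΨ : IsChain (· ≤ ·) Ψ)
    {x y : α} (hx : x ∈ Ψ) (hy : y ∈ Ψ) (hxy : rk x = rk y) : x = y := by
  rcases eq_or_ne x y with he | hne
  · exact he
  rcases hΨ.total hx hy with hle | hle
  · exact absurd (h.rk_strictMono (lt_of_le_of_ne hle hne)) (by omega)
  · exact absurd (h.rk_strictMono (lt_of_le_of_ne hle (Ne.symm hne))) (by omega)

lemma bot_mem_maxChain {B : α} (hB : ∀ G : α, B ≤ G) {Ψ : Set α}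
    (hΨ : IsMaxChain (· ≤ ·) Ψ) : B ∈ Ψ := by
  by_contra hBmem
  have hc : IsChain (· ≤ ·) (insert B Ψ) := hΨ.1.insert (fun x hx _ => Or.inl (hB x))
  have := hΨ.2 hc (Set.subset_insert _ _)
  exact hBmem (this ▸ Set.mem_insert _ _)

lemma top_mem_maxChain {T : α} (hT : ∀ G : α, G ≤ T) {Ψ : Set α}
    (hΨ : IsMaxChain (· ≤ ·) Ψ) : T ∈ Ψ := by
  by_contra hTmem
  have hc : IsChain (· ≤ ·) (insert T Ψ) := hΨ.1.insert (fun x hx _ => Or.inr (hT x))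
  have := hΨ.2 hc (Set.subset_insert _ _)
  exact hTmem (this ▸ Set.mem_insert _ _)

lemma orderAut_lt_iff {γ : Equiv.Perm α} (hγ : γ ∈ orderAutGroup α) (a b : α) :
    γ a < γ b ↔ a < b := by
  simp only [lt_iff_le_not_ge, hγ a b, hγ b a]

lemma orderAut_image_maxChain {γ : Equiv.Perm α} (hγ : γ ∈ orderAutGroup α)
    {Ψ : Set α} (hΨ : IsMaxChain (· ≤ ·) Ψ) : IsMaxChain (· ≤ ·) (γ '' Ψ) := by
  constructor
  · rintro _ ⟨x, hx, rfl⟩ _ ⟨y, hy, rfl⟩ hne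
    have hxy : x ≠ y := fun he => hne (by rw [he])
    rcases hΨ.1 hx hy hxy with hle | hle
    · exact Or.inl ((hγ x y).mpr hle)
    · exact Or.inr ((hγ y x).mpr hle)
  · intro t ht hsub
    have hγi : γ⁻¹ ∈ orderAutGroup α := (orderAutGroup α).inv_mem hγ
    have hc : IsChain (· ≤ ·) (⇑γ⁻¹ '' t) := by
      rintro _ ⟨x, hx, rfl⟩ _ ⟨y, hy, rfl⟩ hne
      have hxy : x ≠ y := fun he => hne (by rw [he])
      rcases ht hx hy hxy with hle | hle
      · exact Or.inl ((hγi x y).mpr hle)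
      · exact Or.inr ((hγi y x).mpr hle)
    have hsub2 : Ψ ⊆ ⇑γ⁻¹ '' t := by
      intro x hx
      exact ⟨γ x, hsub ⟨x, hx, rfl⟩, by simp⟩
    have := hΨ.2 hc hsub2
    rw [this, Set.image_image]
    simp
end helpers

section helpers2
variable {α : Type u} [PartialOrder α] {n : ℕ} {rk : α → ℤ}

lemma orderAut_fix_bot {γ : Equiv.Perm α} (hγ : γ ∈ orderAutGroup α)
    {B : α} (hB : ∀ G : α, B ≤ G) : γ B = B := by
  have h1 : B ≤ γ B := hB _
  have h2 : γ B ≤ γ (γ⁻¹ B) := (hγ B (γ⁻¹ B)).mpr (hB _)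
  rw [show γ (γ⁻¹ B) = B from γ.apply_symm_apply B] at h2
  exact le_antisymm h2 h1

lemma orderAut_fix_top {γ : Equiv.Perm α} (hγ : γ ∈ orderAutGroup α)
    {T : α} (hT : ∀ G : α, G ≤ T) : γ T = T := by
  have h1 : γ T ≤ T := hT _
  have h2 : γ (γ⁻¹ T) ≤ γ T := (hγ (γ⁻¹ T) T).mpr (hT _)
  rw [show γ (γ⁻¹ T) = T from γ.apply_symm_apply T] at h2
  exact le_antisymm h1 h2

lemma chain_lt_of_rk_lt (h : IsIncidenceComplex n rk) {Ψ : Set α}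
    (hΨ : IsChain (· ≤ ·) Ψ) {x y : α} (hx : x ∈ Ψ) (hy : y ∈ Ψ)
    (hr : rk x < rk y) : x < y := by
  have hne : x ≠ y := fun he => by rw [he] at hr; omega
  rcases hΨ.total hx hy with hle | hle
  · exact lt_of_le_of_ne hle hne
  · exact absurd (h.rk_strictMono (lt_of_le_of_ne hle hne.symm)) (by omega)

lemma rk_orderAut_apply (h : IsIncidenceComplex n rk) {γ : Equiv.Perm α}
    (hγ : γ ∈ orderAutGroup α) {Ψ : Set α} (hΨ : IsMaxChain (· ≤ ·) Ψ)
    {x : α} (hx : x ∈ Ψ) : rk (γ x) = rk x := by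
  obtain ⟨B, hBrk, hBle⟩ := h.exists_bot
  have key : ∀ k : ℕ, ∀ x ∈ Ψ, rk x = (k : ℤ) - 1 → rk (γ x) = (k : ℤ) - 1 := by
    intro k
    induction k with
    | zero =>
      intro x hx hrx
      have hBΨ : B ∈ Ψ := bot_mem_maxChain hBle hΨ
      have hxB : x = B := chain_rk_inj h hΨ.1 hx hBΨ (by omega)
      subst hxB
      rw [orderAut_fix_bot hγ hBle]
      omega
    | succ k ih =>
      intro x hx hrx
      have hrx' : rk x = (k : ℤ) := by push_cast at hrx ⊢; omega
      have hkn : (k : ℤ) ≤ n := by have := (h.rk_range x).2; omega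
      obtain ⟨x₀, hx₀Ψ, hx₀r⟩ := h.flag_rk Ψ hΨ ((k : ℤ) - 1) (by omega) (by omega)
      have hIH : rk (γ x₀) = (k : ℤ) - 1 := ih x₀ hx₀Ψ (by omega)
      have hx₀x : x₀ < x := chain_lt_of_rk_lt h hΨ.1 hx₀Ψ hx (by omega)
      have hΨ' := orderAut_image_maxChain hγ hΨ
      obtain ⟨y, hyΨ', hyr⟩ := h.flag_rk _ hΨ' (k : ℤ) (by omega) hkn
      have hγlt : γ x₀ < γ x := (orderAut_lt_iff hγ _ _).mpr hx₀x
      have hγxΨ' : γ x ∈ γ '' Ψ := ⟨x, hx, rfl⟩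
      have hrγx : (k : ℤ) - 1 < rk (γ x) := hIH ▸ h.rk_strictMono hγlt
      rcases eq_or_ne (γ x) y with he | hne2
      · rw [he, hyr]; push_cast; ring
      rcases hΨ'.1.total hγxΨ' hyΨ' with hle | hle
      · have := h.rk_strictMono (lt_of_le_of_ne hle hne2)
        omega
      · exfalso
        have hlt : y < γ x := lt_of_le_of_ne hle hne2.symm
        obtain ⟨z, hzΨ, rfl⟩ := hyΨ'
        have hlt0 : γ x₀ < γ z := chain_lt_of_rk_lt h hΨ'.1 ⟨x₀, hx₀Ψ, rfl⟩
          ⟨z, hzΨ, rfl⟩ (by rw [hIH, hyr]; omega)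
        have h1 : x₀ < z := (orderAut_lt_iff hγ _ _).mp hlt0
        have h2 : z < x := (orderAut_lt_iff hγ _ _).mp hlt
        have := h.rk_strictMono h1
        have := h.rk_strictMono h2
        omega
  have h0 : -1 ≤ rk x := (h.rk_range x).1
  have hc : ((rk x + 1).toNat : ℤ) = rk x + 1 := Int.toNat_of_nonneg (by omega)
  have := key (rk x + 1).toNat x hx (by omega)
  omega

lemma flag_eq_insert (h : IsIncidenceComplex n rk) {B T : α}
    (hBrk : rk B = -1) (hBle : ∀ G : α, B ≤ G)
    (hTrk : rk T = (n : ℤ)) (hTle : ∀ G : α, G ≤ T)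
    {Φ : Set α} (hΦ : IsMaxChain (· ≤ ·) Φ) {F : Fin n → α}
    (hF : ∀ i : Fin n, F i ∈ Φ ∧ rk (F i) = (i : ℤ)) :
    Φ = insert B (insert T (Set.range F)) := by
  apply Set.eq_of_subset_of_subset
  · intro x hx
    have hr := h.rk_range x
    by_cases h1 : rk x = -1
    · exact Or.inl (chain_rk_inj h hΦ.1 hx (bot_mem_maxChain hBle hΦ) (by omega))
    by_cases h2 : rk x = (n : ℤ)
    · exact Or.inr (Or.inl (chain_rk_inj h hΦ.1 hx (top_mem_maxChain hTle hΦ) (by omega)))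
    refine Or.inr (Or.inr ⟨⟨(rk x).toNat, by omega⟩, ?_⟩)
    refine chain_rk_inj h hΦ.1 (hF _).1 hx ?_
    rw [(hF _).2]
    simp only []
    omega
  · rintro x (rfl | rfl | ⟨j, rfl⟩)
    · exact bot_mem_maxChain hBle hΦ
    · exact top_mem_maxChain hTle hΦ
    · exact (hF j).1
end helpers2
section helpers3
variable {α : Type u} [PartialOrder α] {n : ℕ} {rk : α → ℤ}

lemma mem_distinguished {Λ : Subgroup (Equiv.Perm α)} {F : Fin n → α} {c : ℤ}
    {γ : Equiv.Perm α} :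
    γ ∈ distinguishedSubgroup Λ F c ↔
      γ ∈ Λ ∧ ∀ j : Fin n, (j : ℤ) ≠ c → γ (F j) = F j := by
  constructor
  · rintro ⟨h1, h2⟩
    exact ⟨h1, fun j hj => h2 _ ⟨j, hj, rfl⟩⟩
  · rintro ⟨h1, h2⟩
    refine ⟨h1, ?_⟩
    rintro x ⟨j, hj, rfl⟩
    exact h2 j hj
end helpers3


/-- For a regular incidence complex with flag-transitive automorphism group
`Λ`, base flag `Φ` and distinguished subgroups `R i` and `R (-1) = Λ_Φ`, the number of
flags that are `i`-adjacent to `Φ` equals the index `|R i : R (-1)|` minus 1. -/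
theorem card_i_adjacent_flags_eq_index_sub_one
    {α : Type u} [PartialOrder α] {n : ℕ} (rk : α → ℤ)
    (h : IsIncidenceComplex n rk)
    (Λ : Subgroup (Equiv.Perm α)) (hΛ : Λ ≤ orderAutGroup α)
    (htrans : FlagTransitive Λ)
    (Φ : Set α) (hΦ : IsMaxChain (· ≤ ·) Φ)
    (F : Fin n → α) (hF : ∀ i : Fin n, F i ∈ Φ ∧ rk (F i) = (i : ℤ))
    (i : Fin n) :
    Nat.card {Ψ : Set α // IsMaxChain (· ≤ ·) Ψ ∧ IAdjacent rk (i : ℤ) Φ Ψ}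
      = (distinguishedSubgroup Λ F (-1)).relIndex
          (distinguishedSubgroup Λ F (i : ℤ)) - 1 := by
  classical
  obtain ⟨B, hBrk, hBle⟩ := h.exists_bot
  obtain ⟨T, hTrk, hTle⟩ := h.exists_top
  have hΦeq := flag_eq_insert h hBrk hBle hTrk hTle hΦ hF
  set Ri := distinguishedSubgroup Λ F (i : ℤ) with hRi
  set Rm := distinguishedSubgroup Λ F (-1) with hRm
  have hi0 : (0 : ℤ) ≤ (i : ℤ) := by positivity
  have hin : (i : ℤ) < (n : ℤ) := by exact_mod_cast i.2
  have hmemRm : ∀ γ : Equiv.Perm α, γ ∈ Rm ↔ γ ∈ Λ ∧ ∀ j : Fin n, γ (F j) = F j := by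
    intro γ
    rw [hRm, mem_distinguished]
    constructor
    · rintro ⟨h1, h2⟩
      refine ⟨h1, fun j => h2 j ?_⟩
      have : (0 : ℤ) ≤ (j : ℤ) := by positivity
      omega
    · rintro ⟨h1, h2⟩
      exact ⟨h1, fun j _ => h2 j⟩
  have hFiΦ : F i ∈ Φ := (hF i).1
  have hFirk : rk (F i) = (i : ℤ) := (hF i).2
  have hBΦ : B ∈ Φ := bot_mem_maxChain hBle hΦ
  have hTΦ : T ∈ Φ := top_mem_maxChain hTle hΦ
  have hBne : B ≠ F i := fun he => by rw [← he, hBrk] at hFirk; omega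
  have hTne : T ≠ F i := fun he => by rw [← he, hTrk] at hFirk; omega
  have hFne : ∀ j : Fin n, (j : ℤ) ≠ (i : ℤ) → F j ≠ F i :=
    fun j hj he => hj (by rw [← (hF j).2, ← hFirk, he])
  -- image description for elements fixing all F j, j ≠ i
  have himg : ∀ γ : Equiv.Perm α, γ ∈ Λ → (∀ j : Fin n, (j : ℤ) ≠ (i : ℤ) → γ (F j) = F j) →
      γ '' Φ = insert (γ (F i)) (Φ \ {F i}) := by
    intro γ hγΛ hfix
    have hγOA := hΛ hγΛ
    ext y
    constructor
    · rintro ⟨x, hxΦ, rfl⟩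
      rw [hΦeq] at hxΦ
      rcases hxΦ with rfl | rfl | ⟨j, rfl⟩
      · right
        rw [orderAut_fix_bot hγOA hBle]
        exact ⟨hBΦ, hBne⟩
      · right
        rw [orderAut_fix_top hγOA hTle]
        exact ⟨hTΦ, hTne⟩
      · by_cases hj : (j : ℤ) = (i : ℤ)
        · have hji : j = i := Fin.ext (by exact_mod_cast hj)
          rw [hji]
          exact Set.mem_insert _ _
        · right
          rw [hfix j hj]
          exact ⟨(hF j).1, hFne j hj⟩
    · intro hy
      rw [Set.mem_insert_iff] at hy
      rcases hy with rfl | ⟨hyΦ, hyne⟩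
      · exact ⟨F i, hFiΦ, rfl⟩
      · rw [hΦeq] at hyΦ
        rcases hyΦ with hy | hy | ⟨j, hj⟩
        · exact ⟨B, hBΦ, (orderAut_fix_bot hγOA hBle).trans hy.symm⟩
        · exact ⟨T, hTΦ, (orderAut_fix_top hγOA hTle).trans hy.symm⟩
        · have hj2 : (j : ℤ) ≠ (i : ℤ) := by
            intro he
            have hji : j = i := Fin.ext (by exact_mod_cast he)
            have hyF : y = F i := by rw [← hj, hji]
            exact hyne hyF
          exact ⟨F j, (hF j).1, (hfix j hj2).trans hj⟩
  -- a set-preserving automorphism fixes all base faces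
  have hfixall : ∀ γ : Equiv.Perm α, γ ∈ Λ → γ '' Φ = Φ → ∀ j : Fin n, γ (F j) = F j := by
    intro γ hγΛ he j
    have hγOA := hΛ hγΛ
    have h1 : γ (F j) ∈ Φ := he ▸ ⟨F j, (hF j).1, rfl⟩
    have h2 : rk (γ (F j)) = (j : ℤ) := by
      rw [rk_orderAut_apply h hγOA hΦ (hF j).1, (hF j).2]
    exact chain_rk_inj h hΦ.1 h1 (hF j).1 (by rw [h2, (hF j).2])
  -- key coset criterion
  have hkey : ∀ a b : Equiv.Perm α, a ∈ Λ → b ∈ Λ →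
      (a '' Φ = b '' Φ ↔ (a⁻¹ * b) ∈ Rm) := by
    intro a b haΛ hbΛ
    have hcΛ : a⁻¹ * b ∈ Λ := Λ.mul_mem (Λ.inv_mem haΛ) hbΛ
    constructor
    · intro he
      have himgc : ⇑(a⁻¹ * b) '' Φ = Φ := by
        have hco : ⇑(a⁻¹ * b) = ⇑a⁻¹ ∘ ⇑b := rfl
        have hid : ⇑a⁻¹ ∘ ⇑a = id := funext fun x => a.symm_apply_apply x
        rw [hco, Set.image_comp, ← he, ← Set.image_comp, hid, Set.image_id]
      exact (hmemRm _).mpr ⟨hcΛ, hfixall _ hcΛ himgc⟩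
    · intro hc
      obtain ⟨hcΛ', hfix⟩ := (hmemRm _).mp hc
      have himgc : ⇑(a⁻¹ * b) '' Φ = Φ := by
        rw [himg _ hcΛ' (fun j _ => hfix j), hfix i, Set.insert_diff_singleton,
          Set.insert_eq_self.mpr hFiΦ]
      have hco : ⇑a ∘ ⇑(a⁻¹ * b) = ⇑b := by
        rw [← Equiv.Perm.coe_mul, mul_inv_cancel_left]
      conv_rhs => rw [← hco, Set.image_comp, himgc]
  -- well-definedness of the map to flags
  have hmapwd : ∀ γ : Equiv.Perm α, γ ∈ Ri →
      IsMaxChain (· ≤ ·) (γ '' Φ) ∧ (γ '' Φ = Φ ∨ IAdjacent rk (i : ℤ) Φ (γ '' Φ)) := by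
    intro γ hγ
    obtain ⟨hγΛ, hfix⟩ := mem_distinguished.mp hγ
    have hγOA := hΛ hγΛ
    refine ⟨orderAut_image_maxChain hγOA hΦ, ?_⟩
    by_cases hFi : γ (F i) = F i
    · left
      rw [himg γ hγΛ hfix, hFi, Set.insert_diff_singleton, Set.insert_eq_self.mpr hFiΦ]
    · right
      have hni : γ (F i) ∉ Φ \ {F i} := by
        rintro ⟨hmem, -⟩
        exact hFi (chain_rk_inj h hΦ.1 hmem hFiΦ
          (by rw [rk_orderAut_apply h hγOA hΦ hFiΦ]))
      refine ⟨F i, γ (F i), hFiΦ, ⟨F i, hFiΦ, rfl⟩, Ne.symm hFi, hFirk, ?_, ?_⟩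
      · rw [rk_orderAut_apply h hγOA hΦ hFiΦ, hFirk]
      · rw [himg γ hγΛ hfix]
        exact (Set.insert_diff_self_of_notMem hni).symm
  -- surjectivity onto flags equal or adjacent to Φ
  have hsurj : ∀ Ψ : Set α, IsMaxChain (· ≤ ·) Ψ → (Ψ = Φ ∨ IAdjacent rk (i : ℤ) Φ Ψ) →
      ∃ γ, ∃ _ : γ ∈ Ri, γ '' Φ = Ψ := by
    intro Ψ hΨ hor
    rcases hor with rfl | ⟨F', G, hF'Φ, hGΨ, hne, hF'rk, hGrk, hdiff⟩
    · exact ⟨1, Ri.one_mem, by simp⟩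
    · obtain ⟨γ, hγΛ, hγim⟩ := htrans Φ Ψ hΦ hΨ
      have hγOA := hΛ hγΛ
      have hF' : F' = F i := chain_rk_inj h hΦ.1 hF'Φ hFiΦ (by rw [hF'rk, hFirk])
      subst hF'
      refine ⟨γ, mem_distinguished.mpr ⟨hγΛ, ?_⟩, hγim⟩
      intro j hj
      have h1 : γ (F j) ∈ Ψ := hγim ▸ ⟨F j, (hF j).1, rfl⟩
      have h2 : rk (γ (F j)) = (j : ℤ) := by
        rw [rk_orderAut_apply h hγOA hΦ (hF j).1, (hF j).2]
      have h3 : F j ∈ Ψ := by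
        have hm : F j ∈ Φ \ {F i} := ⟨(hF j).1, hFne j hj⟩
        rw [hdiff] at hm
        exact hm.1
      exact chain_rk_inj h hΨ.1 h1 h3 (by rw [h2, (hF j).2])
  have hRmRi : Rm ≤ Ri := by
    intro γ hγ
    obtain ⟨h1, h2⟩ := (hmemRm γ).mp hγ
    exact mem_distinguished.mpr ⟨h1, fun j _ => h2 j⟩
  let Full := {Ψ : Set α // IsMaxChain (· ≤ ·) Ψ ∧ (Ψ = Φ ∨ IAdjacent rk (i : ℤ) Φ Ψ)}
  let Adj := {Ψ : Set α // IsMaxChain (· ≤ ·) Ψ ∧ IAdjacent rk (i : ℤ) Φ Ψ}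
  let f : Ri → Full := fun γ => ⟨(γ : Equiv.Perm α) '' Φ, hmapwd γ γ.2⟩
  have hfRi : ∀ a b : Ri, ((a : Equiv.Perm α)⁻¹ * (b : Equiv.Perm α) ∈ Rm) ↔ f a = f b := by
    intro a b
    have haΛ := (mem_distinguished.mp a.2).1
    have hbΛ := (mem_distinguished.mp b.2).1
    rw [← hkey _ _ haΛ hbΛ]
    exact ⟨fun he => Subtype.ext he, fun he => congrArg Subtype.val he⟩
  let fbar : (Ri ⧸ Rm.subgroupOf Ri) → Full := Quotient.lift f (by
    intro a b hab
    have hm : (a : Equiv.Perm α)⁻¹ * (b : Equiv.Perm α) ∈ Rm := by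
      have h1 := QuotientGroup.leftRel_apply.mp hab
      rw [Subgroup.mem_subgroupOf] at h1
      simpa using h1
    exact (hfRi a b).mp hm)
  have hbij : Function.Bijective fbar := by
    constructor
    · intro x y
      induction x using Quotient.inductionOn with | h a =>
      induction y using Quotient.inductionOn with | h b =>
      intro he
      apply Quotient.sound
      have hfe : f a = f b := he
      have hm : a⁻¹ * b ∈ Rm.subgroupOf Ri :=
        Subgroup.mem_subgroupOf.mpr (by simpa using (hfRi a b).mpr hfe)
      exact QuotientGroup.leftRel_apply.mpr hm
    · rintro ⟨Ψ, hΨ1, hΨ2⟩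
      obtain ⟨γ, hγ, him⟩ := hsurj Ψ hΨ1 hΨ2
      exact ⟨Quotient.mk (QuotientGroup.leftRel (Rm.subgroupOf Ri)) ⟨γ, hγ⟩, Subtype.ext him⟩
  have hcardFull : Nat.card Full = Rm.relIndex Ri := by
    have hrel : Rm.relIndex Ri = Nat.card (Ri ⧸ Rm.subgroupOf Ri) := rfl
    rw [hrel]
    exact (Nat.card_congr (Equiv.ofBijective fbar hbij)).symm
  have hnotself : ¬ IAdjacent rk (i : ℤ) Φ Φ := by
    rintro ⟨F', G, hF', hG, hne, hF'rk, hGrk, -⟩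
    exact hne (chain_rk_inj h hΦ.1 hF' hG (by rw [hF'rk, hGrk]))
  let e2 : Full ≃ Option Adj :=
  { toFun := fun Ψ => if hq : Ψ.1 = Φ then none else
      some ⟨Ψ.1, Ψ.2.1, Ψ.2.2.resolve_left hq⟩
    invFun := fun o => o.elim ⟨Φ, hΦ, Or.inl rfl⟩ (fun A => ⟨A.1, A.2.1, Or.inr A.2.2⟩)
    left_inv := by
      rintro ⟨Ψ', h1, h2⟩
      by_cases hq : Ψ' = Φ
      · simp [hq]
      · simp [hq]
    right_inv := by
      rintro (_ | A)
      · simp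
      · have hne : A.1 ≠ Φ := by
          intro he
          have h2 := A.2.2
          rw [he] at h2
          exact hnotself h2
        simp [hne] }
  show Nat.card Adj = Rm.relIndex Ri - 1
  rw [← hcardFull]
  rcases finite_or_infinite Adj with hfin | hinf
  · haveI := hfin
    rw [Nat.card_congr e2, Finite.card_option]
    simp
  · haveI : Infinite Full := Infinite.of_injective
      (fun A : Adj => (⟨A.1, A.2.1, Or.inr A.2.2⟩ : Full))
      (by
        rintro A A' he
        have hv := Subtype.ext_iff.mp he
        exact Subtype.ext hv)
    rw [Nat.card_eq_zero_of_infinite, Nat.card_eq_zero_of_infinite]
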